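/- Let G be a connected finite simple graph, let u and v be distinct non-adjacent vertices of G with d(u) ≥ d(v), and let v₁, v₂, …, v_s be s distinct vertices that are neighbors of v but not neighbors of u, where 1 ≤ s ≤ d(v). Let G' = G − {vv₁, vv₂, …, vv_s} + {uv₁, uv₂, …, uv_s} be the graph obtained from G by deleting the edges vv₁, …, vv_s and adding the edges uv₁, …, uv_s. Then Π₂(G') > Π₂(G). -/

import Mathlib

lemma L1 (x k : ℕ) : (x+1)^(k+1) ≤ x^(k+1) + (k+1)*(x+1)^k := by
  induction k with
  | zero => simp
  | succ k ih =>
    have hx : x^(k+1) ≤ (x+1)^(k+1) := Nat.pow_le_pow_left (by omega) _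
    calc (x+1)^(k+2) = (x+1)*(x+1)^(k+1) := by ring
      _ ≤ (x+1)*(x^(k+1) + (k+1)*(x+1)^k) := Nat.mul_le_mul_left _ ih
      _ = x^(k+2) + x^(k+1) + (k+1)*(x+1)^(k+1) := by ring
      _ ≤ x^(k+2) + (x+1)^(k+1) + (k+1)*(x+1)^(k+1) := by omega
      _ = x^(k+2) + (k+2)*(x+1)^(k+1) := by ring

lemma L2 (k : ℕ) : (k+2)^(2*k+3) ≤ (k+3)^(k+2) * (k+1)^(k+1) := by
  have h1 := L1 (k^2+4*k+3) k
  have e1 : (k^2+4*k+3+1 : ℕ) = (k+2)^2 := by ring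
  rw [e1] at h1
  have h2 : (k+3) * ((k+2)^2)^(k+1) ≤ (k+3)*(k^2+4*k+3)^(k+1) + (k+3)*((k+1)*((k+2)^2)^k) :=
    by calc (k+3) * ((k+2)^2)^(k+1) ≤ (k+3) * ((k^2+4*k+3)^(k+1) + (k+1)*((k+2)^2)^k) :=
          Nat.mul_le_mul_left _ h1
      _ = (k+3)*(k^2+4*k+3)^(k+1) + (k+3)*((k+1)*((k+2)^2)^k) := by ring
  have e2 : (k+3)*(k^2+4*k+3)^(k+1) = (k+3)^(k+2) * (k+1)^(k+1) := by
    have : (k^2+4*k+3 : ℕ) = (k+3)*(k+1) := by ring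
    rw [this, mul_pow, ← mul_assoc, ← pow_succ']
  have h3 : (k+3)*((k+1)*((k+2)^2)^k) ≤ ((k+2)^2)^(k+1) := by
    have : (k+3)*(k+1) ≤ (k+2)^2 := by nlinarith
    calc (k+3)*((k+1)*((k+2)^2)^k) = ((k+3)*(k+1)) * ((k+2)^2)^k := by ring
      _ ≤ (k+2)^2 * ((k+2)^2)^k := Nat.mul_le_mul_right _ this
      _ = ((k+2)^2)^(k+1) := by rw [← pow_succ']
  have e3 : (k+3) * ((k+2)^2)^(k+1) = (k+2)^(2*k+3) + ((k+2)^2)^(k+1) := by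
    rw [← pow_mul]; ring
  rw [e3, e2] at h2
  omega

lemma L3 {m n : ℕ} (h : m ≤ n) : (m+1)^m * n^n ≤ m^m * (n+1)^n := by
  induction n, h using Nat.le_induction with
  | base => ring_nf; exact le_rfl
  | succ n hmn ih =>
    rcases Nat.eq_zero_or_pos n with h0 | h0
    · subst h0; interval_cases m; simp
    · obtain ⟨k, rfl⟩ := Nat.exists_eq_add_of_le h0
      have hstep := L2 k
      have npos : 0 < (1+k)^(1+k) := Nat.pow_pos (by omega)
      have key : (m+1)^m * ((1+k)+1)^((1+k)+1) * (1+k)^(1+k)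
          ≤ m^m * ((1+k)+2)^((1+k)+1) * (1+k)^(1+k) := by
        calc (m+1)^m * ((1+k)+1)^((1+k)+1) * (1+k)^(1+k)
            = ((m+1)^m * (1+k)^(1+k)) * ((1+k)+1)^((1+k)+1) := by ring
          _ ≤ (m^m * ((1+k)+1)^(1+k)) * ((1+k)+1)^((1+k)+1) := Nat.mul_le_mul_right _ ih
          _ = m^m * (k+2)^(2*k+3) := by
              rw [show ((1+k)+1 : ℕ) = k+2 from by ring, mul_assoc, ← pow_add,
                show (1+k : ℕ) + (k+2) = 2*k+3 from by ring]
          _ ≤ m^m * ((k+3)^(k+2) * (k+1)^(k+1)) := Nat.mul_le_mul_left _ hstep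
          _ = m^m * ((1+k)+2)^((1+k)+1) * (1+k)^(1+k) := by ring_nf
      exact Nat.le_of_mul_le_mul_right key npos

lemma L4 {a c : ℕ} (h : c < a) : a^a * (c+1)^(c+1) < (a+1)^(a+1) * c^c := by
  have h3 := L3 (le_of_lt h)
  have pos : 0 < c^c * (a+1)^a := by
    apply Nat.mul_pos
    · rcases Nat.eq_zero_or_pos c with h0|h0; · simp [h0]
      exact Nat.pow_pos h0
    · exact Nat.pow_pos (by omega)
  calc a^a * (c+1)^(c+1) = (c+1) * ((c+1)^c * a^a) := by ring
    _ ≤ (c+1) * (c^c * (a+1)^a) := Nat.mul_le_mul_left _ h3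
    _ < (a+1) * (c^c * (a+1)^a) := by
        exact Nat.mul_lt_mul_of_lt_of_le (by omega) le_rfl pos
    _ = (a+1)^(a+1) * c^c := by ring

lemma L5 {a b : ℕ} (t : ℕ) (ht : 1 ≤ t) (htb : t ≤ b) (hba : b ≤ a) :
    a^a * b^b < (a+t)^(a+t) * (b-t)^(b-t) := by
  induction t with
  | zero => omega
  | succ t ih =>
    rcases Nat.eq_zero_or_pos t with h0 | h0
    · subst h0
      obtain ⟨c, rfl⟩ : ∃ c, b = c + 1 := ⟨b - 1, by omega⟩
      simpa using L4 (show c < a by omega)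
    · have h1 := ih h0 (by omega)
      have h2 : (a+t)^(a+t) * (b-t)^(b-t) < (a+t+1)^(a+t+1) * (b-t-1)^(b-t-1) := by
        obtain ⟨c, hc⟩ : ∃ c, b - t = c + 1 := ⟨b - t - 1, by omega⟩
        rw [hc, show c + 1 - 1 = c from rfl]
        exact L4 (show c < a + t by omega)
      have e : b - (t+1) = b - t - 1 := by omega
      rw [show a + (t+1) = a + t + 1 from by ring, e]
      exact lt_trans h1 h2



/-- The second multiplicative Zagreb index `Π₂(G) = ∏_{u ∈ V(G)} d(u)^{d(u)}`
(with the natural-number convention `0^0 = 1`). -/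
noncomputable def multZagreb2 {V : Type*} [Fintype V] (G : SimpleGraph V) : ℕ :=
  letI := Classical.decRel G.Adj
  ∏ v : V, (G.degree v) ^ (G.degree v)

lemma multZagreb2_eq {V : Type*} [Fintype V] (G : SimpleGraph V)
    [inst : ∀ w, Fintype (G.neighborSet w)] :
    multZagreb2 G = ∏ w : V, G.degree w ^ G.degree w := by
  unfold multZagreb2
  congr!

/-- **Lemma 4 (Wang).** Let `G` be a connected graph, `u ≠ v` non-adjacent
vertices with `d(u) ≥ d(v)`, and let `v₁, …, v_t` (given by an injective
`f : Fin t → V`) be distinct neighbors of `v` that are not neighbors of `u`,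
`1 ≤ t ≤ d(v)`.  Moving these edges from `v` to `u`, i.e. forming
`G' = G - {vv₁, …, vv_t} + {uv₁, …, uv_t}`, strictly increases `Π₂`. -/
theorem multZagreb2_moveEdges_gt {V : Type*} [Fintype V] (G : SimpleGraph V)
    [DecidableRel G.Adj] (hG : G.Connected)
    (u v : V) (huv : u ≠ v) (hadj : ¬ G.Adj u v)
    (hdeg : G.degree v ≤ G.degree u)
    (t : ℕ) (ht : 1 ≤ t) (htd : t ≤ G.degree v)
    (f : Fin t → V) (hf : Function.Injective f)
    (hfv : ∀ i, G.Adj v (f i)) (hfu : ∀ i, ¬ G.Adj u (f i)) :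
    multZagreb2 G <
      multZagreb2 ((G.deleteEdges (Set.range fun i => s(v, f i))) ⊔
        SimpleGraph.fromEdgeSet (Set.range fun i => s(u, f i))) := by
  classical
  classical
  set G' := (G.deleteEdges (Set.range fun i => s(v, f i))) ⊔
      SimpleGraph.fromEdgeSet (Set.range fun i => s(u, f i)) with hG'
  have hfiu : ∀ i, f i ≠ u := fun i h => hadj (h ▸ (hfv i)).symm
  have hfiv : ∀ i, f i ≠ v := fun i h => G.irrefl (h ▸ (hfv i))
  set R : Finset V := Finset.univ.image f with hRdef
  have hRcard : R.card = t := by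
    rw [hRdef, Finset.card_image_of_injective _ hf, Finset.card_univ, Fintype.card_fin]
  have hmemR : ∀ x, x ∈ R ↔ ∃ i, f i = x := by
    intro x; simp [hRdef]
  -- adjacency lemma
  have hAdj : ∀ x y, G'.Adj x y ↔
      ((G.Adj x y ∧ ¬ ∃ i, s(v, f i) = s(x, y)) ∨ ((∃ i, s(u, f i) = s(x, y)) ∧ x ≠ y)) := by
    intro x y
    rw [hG']
    simp [SimpleGraph.deleteEdges_adj, SimpleGraph.fromEdgeSet_adj, Set.mem_range]
  have hNu : G'.neighborFinset u = G.neighborFinset u ∪ R := by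
    ext y
    simp only [SimpleGraph.mem_neighborFinset, hAdj, Finset.mem_union, hmemR]
    constructor
    · rintro (⟨h, -⟩ | ⟨⟨i, hi⟩, -⟩)
      · exact Or.inl h
      · rw [Sym2.eq_iff] at hi
        rcases hi with ⟨-, h2⟩ | ⟨-, h2⟩
        · exact Or.inr ⟨i, h2⟩
        · exact absurd h2 (hfiu i)
    · rintro (h | ⟨i, hi⟩)
      · refine Or.inl ⟨h, ?_⟩
        rintro ⟨i, hi⟩
        rw [Sym2.eq_iff] at hi
        rcases hi with ⟨h1, -⟩ | ⟨-, h2⟩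
        · exact huv h1.symm
        · exact hfiu i h2
      · exact Or.inr ⟨⟨i, by rw [hi]⟩, fun h => hfiu i (hi.trans h.symm)⟩
  have hNv : G'.neighborFinset v = G.neighborFinset v \ R := by
    ext y
    simp only [SimpleGraph.mem_neighborFinset, hAdj, Finset.mem_sdiff, hmemR]
    constructor
    · rintro (⟨h, hn⟩ | ⟨⟨i, hi⟩, -⟩)
      · refine ⟨h, fun ⟨i, hi⟩ => hn ⟨i, by rw [hi]⟩⟩
      · rw [Sym2.eq_iff] at hi
        rcases hi with ⟨h1, -⟩ | ⟨-, h2⟩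
        · exact absurd h1 huv
        · exact absurd h2 (hfiv i)
    · rintro ⟨h, hn⟩
      refine Or.inl ⟨h, ?_⟩
      rintro ⟨i, hi⟩
      rw [Sym2.eq_iff] at hi
      rcases hi with ⟨-, h2⟩ | ⟨h1, -⟩
      · exact hn ⟨i, h2⟩
      · exact G.irrefl (h1 ▸ h)
  have hRsub : R ⊆ G.neighborFinset v := by
    intro x hx
    obtain ⟨i, hi⟩ := (hmemR x).1 hx
    rw [SimpleGraph.mem_neighborFinset, ← hi]
    exact hfv i
  have hRdisj : Disjoint (G.neighborFinset u) R := by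
    rw [Finset.disjoint_right]
    intro x hx hx'
    obtain ⟨i, hi⟩ := (hmemR x).1 hx
    exact hfu i (by rw [hi]; exact (SimpleGraph.mem_neighborFinset _ _ _).1 hx')
  have hdu : G'.degree u = G.degree u + t := by
    rw [SimpleGraph.degree, hNu, Finset.card_union_of_disjoint hRdisj, hRcard]
    rfl
  have hdv : G'.degree v = G.degree v - t := by
    rw [SimpleGraph.degree, hNv, Finset.card_sdiff_of_subset hRsub, hRcard]
    rfl
  have hdw : ∀ w, w ≠ u → w ≠ v → G'.degree w = G.degree w := by
    intro w hwu hwv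
    by_cases hwR : w ∈ R
    · obtain ⟨j, hj⟩ := (hmemR w).1 hwR
      have hN : G'.neighborFinset w = insert u ((G.neighborFinset w).erase v) := by
        ext y
        simp only [SimpleGraph.mem_neighborFinset, hAdj, Finset.mem_insert, Finset.mem_erase]
        constructor
        · rintro (⟨h, hn⟩ | ⟨⟨i, hi⟩, hne⟩)
          · refine Or.inr ⟨?_, h⟩
            rintro rfl
            exact hn ⟨j, by rw [Sym2.eq_iff]; exact Or.inr ⟨rfl, hj⟩⟩
          · rw [Sym2.eq_iff] at hi
            rcases hi with ⟨h1, -⟩ | ⟨h1, -⟩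
            · exact absurd h1.symm hwu
            · exact Or.inl h1.symm
        · rintro (rfl | ⟨hyv, h⟩)
          · refine Or.inr ⟨⟨j, ?_⟩, fun h => hwu h⟩
            rw [Sym2.eq_iff]; exact Or.inr ⟨rfl, hj⟩
          · refine Or.inl ⟨h, ?_⟩
            rintro ⟨i, hi⟩
            rw [Sym2.eq_iff] at hi
            rcases hi with ⟨h1, -⟩ | ⟨h1, h2⟩
            · exact hwv h1.symm
            · exact hyv h1.symm
      rw [SimpleGraph.degree, hN, Finset.card_insert_of_notMem, Finset.card_erase_of_mem,
        SimpleGraph.degree]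
      · have : 0 < (G.neighborFinset w).card := by
          rw [Finset.card_pos]
          exact ⟨v, by rw [SimpleGraph.mem_neighborFinset, ← hj]; exact (hfv j).symm⟩
        omega
      · rw [SimpleGraph.mem_neighborFinset, ← hj]; exact (hfv j).symm
      · rw [Finset.mem_erase]
        rintro ⟨-, hu⟩
        rw [SimpleGraph.mem_neighborFinset, ← hj] at hu
        exact hfu j hu.symm
    · have hN : G'.neighborFinset w = G.neighborFinset w := by
        ext y
        simp only [SimpleGraph.mem_neighborFinset, hAdj]
        constructor
        · rintro (⟨h, -⟩ | ⟨⟨i, hi⟩, -⟩)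
          · exact h
          · rw [Sym2.eq_iff] at hi
            rcases hi with ⟨h1, -⟩ | ⟨h1, h2⟩
            · exact absurd h1.symm hwu
            · exact absurd ((hmemR w).2 ⟨i, h2⟩) hwR
        · intro h
          refine Or.inl ⟨h, ?_⟩
          rintro ⟨i, hi⟩
          rw [Sym2.eq_iff] at hi
          rcases hi with ⟨h1, -⟩ | ⟨h1, h2⟩
          · exact hwv h1.symm
          · exact hwR ((hmemR w).2 ⟨i, h2⟩)
      rw [SimpleGraph.degree, hN, SimpleGraph.degree]
  -- assemble
  have ppos : ∀ x : ℕ, 0 < x ^ x := by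
    intro x
    rcases Nat.eq_zero_or_pos x with h|h
    · simp [h]
    · exact Nat.pow_pos h
  rw [multZagreb2_eq G, multZagreb2_eq G']
  have hsub : ({u, v} : Finset V) ⊆ Finset.univ := Finset.subset_univ _
  rw [← Finset.prod_sdiff hsub, ← Finset.prod_sdiff hsub]
  have hC : (∏ x ∈ Finset.univ \ {u, v}, G'.degree x ^ G'.degree x)
      = ∏ x ∈ Finset.univ \ {u, v}, G.degree x ^ G.degree x := by
    apply Finset.prod_congr rfl
    intro x hx
    simp only [Finset.mem_sdiff, Finset.mem_insert, Finset.mem_singleton] at hx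
    rw [hdw x (fun h => hx.2 (Or.inl h)) (fun h => hx.2 (Or.inr h))]
  rw [hC, Finset.prod_pair huv, Finset.prod_pair huv]
  apply Nat.mul_lt_mul_of_le_of_lt le_rfl
  · rw [hdu, hdv]
    exact L5 t ht htd hdeg
  · exact Finset.prod_pos (fun x _ => ppos _)
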